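/- Let f belong to the class S, let p(z) = (1/2)·Log((1+z)/(1−z)), let c be a purely imaginary complex number (Re c = 0), and let 0 < r < 1 and 0 < r' < 1. Suppose that the image of the disk {|z| < r} under f is a translate of the image of the disk {|z| < r'} under p, namely f({|z| < r}) + c = p({|z| < r'}) (as subsets of ℂ). Then r' ≥ r, and r' = r holds if and only if f(z) = p(z) for all z in the unit disk (in which case c = 0). -/

import Mathlib

open Complex Metric Set

noncomputable def pp (z : ℂ) : ℂ := (1 / 2) * Complex.log ((1 + z) / (1 - z))
noncomputable def qq (w : ℂ) : ℂ := (Complex.exp (2*w) - 1) / (Complex.exp (2*w) + 1)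

lemma normSq_lt_one {z : ℂ} (hz : z ∈ ball (0:ℂ) 1) : normSq z < 1 := by
  rw [mem_ball, dist_zero_right] at hz
  rw [Complex.normSq_eq_norm_sq]
  have habs : ‖z‖ < 1 := hz
  nlinarith [norm_nonneg z]

lemma one_sub_ne {z : ℂ} (hz : z ∈ ball (0:ℂ) 1) : (1:ℂ) - z ≠ 0 := by
  intro h
  have : z = 1 := by linear_combination -h
  rw [this] at hz
  norm_num [mem_ball] at hz

lemma one_add_ne {z : ℂ} (hz : z ∈ ball (0:ℂ) 1) : (1:ℂ) + z ≠ 0 := by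
  intro h
  have : z = -1 := by linear_combination h
  rw [this] at hz
  norm_num [mem_ball] at hz

lemma re_pos {z : ℂ} (hz : z ∈ ball (0:ℂ) 1) : 0 < (((1:ℂ) + z) / (1 - z)).re := by
  have h1 := normSq_lt_one hz
  have h2 : (1:ℂ) - z ≠ 0 := one_sub_ne hz
  have h3 : 0 < normSq (1 - z) := normSq_pos.2 h2
  rw [normSq_apply] at h1
  rw [div_re, ← add_div]
  apply div_pos _ h3
  simp only [add_re, add_im, sub_re, sub_im, one_re, one_im]
  nlinarith

lemma frac_ne_zero {z : ℂ} (hz : z ∈ ball (0:ℂ) 1) : ((1:ℂ) + z) / (1 - z) ≠ 0 :=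
  div_ne_zero (one_add_ne hz) (one_sub_ne hz)

lemma exp_two_pp {z : ℂ} (hz : z ∈ ball (0:ℂ) 1) :
    Complex.exp (2 * pp z) = (1 + z) / (1 - z) := by
  have : 2 * pp z = Complex.log ((1 + z) / (1 - z)) := by rw [pp]; ring
  rw [this, Complex.exp_log (frac_ne_zero hz)]

lemma exp_two_pp_add_one_ne {z : ℂ} (hz : z ∈ ball (0:ℂ) 1) :
    Complex.exp (2 * pp z) + 1 ≠ 0 := by
  rw [exp_two_pp hz]
  intro h
  have := re_pos hz
  rw [show ((1:ℂ)+z)/(1-z) = -1 by linear_combination h] at this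
  simp at this
  linarith

lemma qq_pp {z : ℂ} (hz : z ∈ ball (0:ℂ) 1) : qq (pp z) = z := by
  rw [qq, exp_two_pp hz]
  have h2 := one_sub_ne hz
  have h3 : ((1:ℂ) + z) / (1 - z) + 1 ≠ 0 := by
    rw [← exp_two_pp hz]; exact exp_two_pp_add_one_ne hz
  field_simp
  ring

lemma pp_zero : pp 0 = 0 := by simp [pp]

lemma hasDerivAt_pp {z : ℂ} (hz : z ∈ ball (0:ℂ) 1) :
    HasDerivAt pp (1 / ((1 + z) * (1 - z))) z := by
  have h1 : ((1:ℂ) + z) / (1 - z) ∈ slitPlane := Or.inl (re_pos hz)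
  have h2 := one_sub_ne hz
  have h3 := one_add_ne hz
  have hq : HasDerivAt (fun w : ℂ => (1 + w) / (1 - w)) (2 / (1 - z)^2) z := by
    have hA : HasDerivAt (fun w : ℂ => 1 + w) 1 z := (hasDerivAt_id z).const_add 1
    have hB : HasDerivAt (fun w : ℂ => 1 - w) (-1) z := (hasDerivAt_id z).const_sub 1
    have := hA.div hB h2
    refine this.congr_deriv ?_
    congr 1
    ring
  have hlog := (Complex.hasDerivAt_log h1).comp z hq
  have hfin := hlog.const_mul ((1:ℂ)/2)
  have : HasDerivAt pp ((1:ℂ)/2 * (((1 + z) / (1 - z))⁻¹ * (2 / (1 - z)^2))) z := hfin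
  convert this using 1
  field_simp

lemma hasDerivAt_qq {w : ℂ} (hw : Complex.exp (2*w) + 1 ≠ 0) :
    HasDerivAt qq (4 * Complex.exp (2*w) / (Complex.exp (2*w) + 1)^2) w := by
  have he : HasDerivAt (fun u : ℂ => Complex.exp (2*u)) (2 * Complex.exp (2*w)) w := by
    simpa [mul_comm] using (((hasDerivAt_id w).const_mul (2:ℂ)).cexp)
  have := (he.sub_const 1).div (he.add_const 1) hw
  refine this.congr_deriv ?_
  congr 1
  ring

noncomputable def mob (R : ℝ) (a w : ℂ) : ℂ :=
  (R:ℂ)^2 * (w - a) / ((R:ℂ)^2 - (starRingEnd ℂ) a * w)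

lemma mob_denom_ne {R : ℝ} {a w : ℂ} (hR : 0 < R) (ha : a ∈ ball (0:ℂ) R)
    (hw : w ∈ ball (0:ℂ) R) : ((R:ℂ)^2 - (starRingEnd ℂ) a * w) ≠ 0 := by
  intro h
  have habs : ‖(starRingEnd ℂ) a * w‖ = ‖a‖ * ‖w‖ := by
    rw [norm_mul, Complex.norm_conj]
  have h1 : ‖a‖ < R := by rwa [mem_ball, dist_zero_right] at ha
  have h2 : ‖w‖ < R := by rwa [mem_ball, dist_zero_right] at hw
  have : (starRingEnd ℂ) a * w = (R:ℂ)^2 := by linear_combination -h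
  rw [this] at habs
  have : ‖((R:ℂ)^2)‖ = R^2 := by
    rw [norm_pow, Complex.norm_real, Real.norm_eq_abs, abs_of_pos hR]
  rw [this] at habs
  nlinarith [norm_nonneg a, norm_nonneg w]

lemma mob_maps {R : ℝ} {a w : ℂ} (hR : 0 < R) (ha : a ∈ ball (0:ℂ) R)
    (hw : w ∈ ball (0:ℂ) R) : mob R a w ∈ ball (0:ℂ) R := by
  have hden := mob_denom_ne hR ha hw
  have h1 : normSq a < R^2 := by
    have := (by rwa [mem_ball, dist_zero_right] at ha : ‖a‖ < R)
    rw [Complex.normSq_eq_norm_sq]; nlinarith [norm_nonneg a]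
  have h2 : normSq w < R^2 := by
    have := (by rwa [mem_ball, dist_zero_right] at hw : ‖w‖ < R)
    rw [Complex.normSq_eq_norm_sq]; nlinarith [norm_nonneg w]
  have key : normSq (mob R a w) < R^2 := by
    rw [mob, normSq_div, div_lt_iff₀ (normSq_pos.2 hden)]
    simp only [normSq_apply] at h1 h2 ⊢
    simp only [mul_re, mul_im, sub_re, sub_im, pow_two, Complex.ofReal_re, Complex.ofReal_im,
      conj_re, conj_im, mul_zero, zero_mul, sub_zero, zero_sub, neg_neg, neg_mul, mul_neg]
    nlinarith [mul_pos (mul_pos hR hR) (mul_pos (sub_pos.2 h1) (sub_pos.2 h2)),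
      mul_pos hR hR]
  rw [mem_ball, dist_zero_right]
  nlinarith [norm_nonneg (mob R a w), (Complex.normSq_eq_norm_sq (mob R a w)).symm.trans_lt key]

lemma mob_self (R : ℝ) (a : ℂ) : mob R a a = 0 := by simp [mob]

lemma differentiableAt_mob {R : ℝ} {a w : ℂ} (hR : 0 < R) (ha : a ∈ ball (0:ℂ) R)
    (hw : w ∈ ball (0:ℂ) R) : DifferentiableAt ℂ (mob R a) w := by
  show DifferentiableAt ℂ (fun w => (R:ℂ)^2 * (w - a) / ((R:ℂ)^2 - (starRingEnd ℂ) a * w)) w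
  exact DifferentiableAt.div (by fun_prop) (by fun_prop) (mob_denom_ne hR ha hw)

lemma hasDerivAt_mob {R : ℝ} {a : ℂ} (hR : 0 < R) (ha : a ∈ ball (0:ℂ) R) :
    HasDerivAt (mob R a) ((R:ℂ)^2 / ((R:ℂ)^2 - ((normSq a : ℝ) : ℂ))) a := by
  have hden := mob_denom_ne hR ha ha
  have hN : HasDerivAt (fun w : ℂ => (R:ℂ)^2 * (w - a)) ((R:ℂ)^2) a := by
    simpa using ((hasDerivAt_id a).sub_const a).const_mul ((R:ℂ)^2)
  have hD : HasDerivAt (fun w : ℂ => (R:ℂ)^2 - (starRingEnd ℂ) a * w)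
      (-((starRingEnd ℂ) a)) a := by
    simpa using ((hasDerivAt_id a).const_mul ((starRingEnd ℂ) a)).const_sub ((R:ℂ)^2)
  have := hN.div hD hden
  have hconj : (starRingEnd ℂ) a * a = ((normSq a : ℝ) : ℂ) := by
    rw [mul_comm, mul_conj]
  refine this.congr_deriv ?_
  rw [← hconj]
  field_simp
  ring

lemma normSq_lt_sq {R : ℝ} {a : ℂ} (hR : 0 < R) (ha : a ∈ ball (0:ℂ) R) :
    normSq a < R^2 := by
  have h1 : ‖a‖ < R := by rwa [mem_ball, dist_zero_right] at ha
  rw [Complex.normSq_eq_norm_sq]; nlinarith [norm_nonneg a]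

lemma key (F : ℂ → ℂ) (hF : DifferentiableOn ℂ F (ball 0 1)) (hF0 : F 0 = 0)
    (hF'0 : deriv F 0 = 1) (c : ℂ) (r r' : ℝ) (hr0 : 0 < r) (hr1 : r < 1)
    (hr'0 : 0 < r') (hr'1 : r' < 1)
    (hsub : ∀ z ∈ ball (0:ℂ) r, ∃ u ∈ ball (0:ℂ) r', F z + c = pp u) :
    r ≤ r' ∧ (r' = r → c = 0 ∧ ∀ z ∈ ball (0:ℂ) r, F z = pp z) := by
  have hball : ball (0:ℂ) r ⊆ ball 0 1 := ball_subset_ball hr1.le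
  have hball' : ball (0:ℂ) r' ⊆ ball 0 1 := ball_subset_ball hr'1.le
  set g : ℂ → ℂ := fun z => qq (F z + c) with hgdef
  have hgval : ∀ z ∈ ball (0:ℂ) r, g z ∈ ball (0:ℂ) r' ∧ F z + c = pp (g z) := by
    intro z hz
    obtain ⟨u, hu, he⟩ := hsub z hz
    have hgz : g z = u := by rw [hgdef]; simp only; rw [he, qq_pp (hball' hu)]
    rw [hgz]; exact ⟨hu, he⟩
  have h0r : (0:ℂ) ∈ ball (0:ℂ) r := mem_ball_self hr0
  set a := g 0 with hadef
  have ha' : a ∈ ball (0:ℂ) r' := (hgval 0 h0r).1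
  have hca : c = pp a := by
    have := (hgval 0 h0r).2; rwa [hF0, zero_add] at this
  -- differentiability of g
  have hdiffg : ∀ z ∈ ball (0:ℂ) r, DifferentiableAt ℂ g z := by
    intro z hz
    have hFd : DifferentiableAt ℂ F z := hF.differentiableAt (isOpen_ball.mem_nhds (hball hz))
    have hne : Complex.exp (2*(F z + c)) + 1 ≠ 0 := by
      rw [(hgval z hz).2]; exact exp_two_pp_add_one_ne (hball' (hgval z hz).1)
    exact ((hasDerivAt_qq hne).comp z (hFd.hasDerivAt.add_const c)).differentiableAt
  have hgd : DifferentiableOn ℂ g (ball (0:ℂ) r) :=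
    fun z hz => (hdiffg z hz).differentiableWithinAt
  have hmapsg : MapsTo g (ball (0:ℂ) r) (ball (0:ℂ) r') := fun z hz => (hgval z hz).1
  -- derivative of g at 0
  have ha1s : (1:ℂ) - a ≠ 0 := one_sub_ne (hball' ha')
  have hexp_c : Complex.exp (2*c) = (1+a)/(1-a) := by
    rw [hca]; exact exp_two_pp (hball' ha')
  have hderivg : HasDerivAt g (1 - a^2) 0 := by
    have hFd : DifferentiableAt ℂ F 0 := hF.differentiableAt (isOpen_ball.mem_nhds (hball h0r))
    have hF1 : HasDerivAt F 1 0 := hF'0 ▸ hFd.hasDerivAt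
    have hne : Complex.exp (2*(F 0 + c)) + 1 ≠ 0 := by
      rw [(hgval 0 h0r).2]; exact exp_two_pp_add_one_ne (hball' ha')
    have hcomp := (hasDerivAt_qq hne).comp 0 (hF1.add_const c)
    rw [hF0, zero_add] at hcomp
    refine hcomp.congr_deriv ?_
    rw [hexp_c]
    have h4 : (1+a)/(1-a) + 1 ≠ 0 := by
      rw [← hexp_c, hca]
      exact exp_two_pp_add_one_ne (hball' ha')
    field_simp
    ring
  -- Möbius composition
  set t := normSq a with htdef
  have ht0 : 0 ≤ t := normSq_nonneg a
  have htr : t < r'^2 := normSq_lt_sq hr'0 ha'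
  set h : ℂ → ℂ := fun z => mob r' a (g z) with hhdef
  have hh0 : h 0 = 0 := by rw [hhdef]; simp only [← hadef]; exact mob_self r' a
  have hhd : DifferentiableOn ℂ h (ball (0:ℂ) r) := by
    intro z hz
    exact ((differentiableAt_mob hr'0 ha' (hmapsg hz)).comp z (hdiffg z hz)).differentiableWithinAt
  have hhmaps : MapsTo h (ball (0:ℂ) r) (ball (h 0) r') := by
    rw [hh0]; intro z hz; exact mob_maps hr'0 ha' (hmapsg hz)
  have hderivh : HasDerivAt h (((r':ℂ)^2 / ((r':ℂ)^2 - ((t : ℝ) : ℂ))) * (1 - a^2)) 0 :=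
    by have := (hasDerivAt_mob hr'0 ha').comp 0 hderivg; exact this
  -- Schwarz inequality
  have hschwarz := Complex.norm_deriv_le_div_of_mapsTo_ball hhd (hhmaps.mono_right ball_subset_closedBall) hr0
  rw [hderivh.deriv] at hschwarz
  have hpos : 0 < r'^2 - t := by linarith
  have habs : ‖((r':ℂ)^2 / ((r':ℂ)^2 - ((t : ℝ) : ℂ))) * (1 - a^2)‖
      = r'^2 / (r'^2 - t) * ‖1 - a^2‖ := by
    rw [norm_mul, norm_div]
    congr 2
    · rw [norm_pow, Complex.norm_real, Real.norm_eq_abs, abs_of_pos hr'0]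
    · rw [show ((r':ℂ)^2 - ((t:ℝ):ℂ)) = (((r'^2 - t : ℝ)):ℂ) by push_cast; ring,
        Complex.norm_real, Real.norm_eq_abs, abs_of_pos hpos]
  rw [habs] at hschwarz
  have habs2 : ‖a^2‖ = t := by
    rw [norm_pow]; exact (Complex.normSq_eq_norm_sq a).symm
  have hlow : 1 - t ≤ ‖1 - a^2‖ := by
    have hns := norm_sub_norm_le (1:ℂ) (a^2)
    simp only [norm_one] at hns
    rw [habs2] at hns
    exact hns
  have hstep : r'^2 / (r'^2 - t) * (1 - t) ≤ r' / r := by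
    refine le_trans ?_ hschwarz
    exact mul_le_mul_of_nonneg_left hlow (by positivity)
  rw [div_mul_eq_mul_div, div_le_div_iff₀ hpos hr0] at hstep
  -- hstep : r'^2 * (1 - t) * r ≤ r' * (r'^2 - t)
  have hrr' : r ≤ r' := by
    nlinarith [mul_nonneg (mul_nonneg hr'0.le ht0) (sub_nonneg.2 (show r*r' ≤ 1 by nlinarith)),
      mul_pos hr'0 hr'0]
  refine ⟨hrr', ?_⟩
  intro hrr
  subst hrr
  have hT : t = 0 := by
    have h5 : t * (r' * (1 - r'^2)) ≤ 0 := by nlinarith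
    nlinarith [mul_pos hr'0 (show (0:ℝ) < 1 - r'^2 by nlinarith)]
  have ha0 : a = 0 := normSq_eq_zero.1 hT
  have hc0 : c = 0 := by rw [hca, ha0, pp_zero]
  refine ⟨hc0, ?_⟩
  have h_maps : MapsTo g (ball (0:ℂ) r') (closedBall (g 0) r') := by
    rw [← hadef, ha0]; exact hmapsg.mono_right ball_subset_closedBall
  have hnormeq : ‖dslope g 0 0‖ = r' / r' := by
    rw [dslope_same, hderivg.deriv, ha0, div_self hr0.ne']
    norm_num
  have heqOn := Complex.affine_of_mapsTo_ball_of_norm_dslope_eq_div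
    hgd h_maps h0r hnormeq
  intro z hz
  have hgz : g z = z := by
    have := heqOn hz
    rw [dslope_same, hderivg.deriv, ha0, ← hadef, ha0] at this
    simpa using this
  have := (hgval z hz).2
  rw [hc0, add_zero, hgz] at this
  exact this

lemma pp_diffOn : DifferentiableOn ℂ pp (ball (0:ℂ) 1) :=
  fun z hz => (hasDerivAt_pp hz).differentiableAt.differentiableWithinAt

lemma deriv_pp_zero : deriv pp 0 = 1 := by
  have := (hasDerivAt_pp (mem_ball_self one_pos)).deriv
  simpa using this

/-- If `f ∈ S`, `c` is purely imaginary, `0 < r < 1`, `0 < r' < 1`, and the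
translate `f({|z| < r}) + c` equals `p({|z| < r'})` where `p(z) = (1/2)·Log((1+z)/(1-z))`,
then `r' ≥ r`, with equality iff `f = p` on the unit disk. -/
theorem schwarz_lemma_step
    (f : ℂ → ℂ)
    (hf_holo : DifferentiableOn ℂ f (ball (0 : ℂ) 1))
    (hf_inj : InjOn f (ball (0 : ℂ) 1))
    (hf0 : f 0 = 0) (hf'0 : deriv f 0 = 1)
    (c : ℂ) (hc : c.re = 0)
    (r r' : ℝ) (hr0 : 0 < r) (hr1 : r < 1) (hr'0 : 0 < r') (hr'1 : r' < 1)
    (himage : (fun w => w + c) '' (f '' ball (0 : ℂ) r) =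
      (fun z : ℂ => (1 / 2) * Complex.log ((1 + z) / (1 - z))) '' ball (0 : ℂ) r') :
    r ≤ r' ∧
      (r' = r ↔ ∀ z ∈ ball (0 : ℂ) 1,
        f z = (1 / 2) * Complex.log ((1 + z) / (1 - z))) := by
  have himage' : (fun w => w + c) '' (f '' ball (0 : ℂ) r) = pp '' ball (0 : ℂ) r' := himage
  have hball : ball (0:ℂ) r ⊆ ball 0 1 := ball_subset_ball hr1.le
  have hsub : ∀ z ∈ ball (0:ℂ) r, ∃ u ∈ ball (0:ℂ) r', f z + c = pp u := by
    intro z hz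
    have hm : f z + c ∈ pp '' ball (0:ℂ) r' := by
      rw [← himage']
      exact ⟨f z, ⟨z, hz, rfl⟩, rfl⟩
    obtain ⟨u, hu, he⟩ := hm
    exact ⟨u, hu, he.symm⟩
  obtain ⟨hle, heqcase⟩ := key f hf_holo hf0 hf'0 c r r' hr0 hr1 hr'0 hr'1 hsub
  refine ⟨hle, ?_, ?_⟩
  · -- r' = r → f = pp on ball 0 1
    intro hrr
    obtain ⟨hc0, hEq⟩ := heqcase hrr
    have hfa : AnalyticOnNhd ℂ f (ball (0:ℂ) 1) := hf_holo.analyticOnNhd isOpen_ball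
    have hpa : AnalyticOnNhd ℂ pp (ball (0:ℂ) 1) := pp_diffOn.analyticOnNhd isOpen_ball
    have hev : f =ᶠ[nhds (0:ℂ)] pp :=
      Filter.eventuallyEq_of_mem (ball_mem_nhds (0:ℂ) hr0) hEq
    have := hfa.eqOn_of_preconnected_of_eventuallyEq hpa
      (convex_ball (0:ℂ) 1).isPreconnected (mem_ball_self one_pos) hev
    intro z hz
    exact this hz
  · -- f = pp on ball 0 1 → r' = r
    intro hfp
    have hsub' : ∀ u ∈ ball (0:ℂ) r', ∃ z ∈ ball (0:ℂ) r, pp u + (-c) = pp z := by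
      intro u hu
      have hm : pp u ∈ (fun w => w + c) '' (f '' ball (0:ℂ) r) := by
        rw [himage']
        exact ⟨u, hu, rfl⟩
      obtain ⟨y, ⟨z, hz, rfl⟩, hy⟩ := hm
      refine ⟨z, hz, ?_⟩
      have hfz : f z = pp z := hfp z (hball hz)
      rw [← hfz]
      simp only at hy
      linear_combination -hy
    obtain ⟨hle', -⟩ := key pp pp_diffOn pp_zero deriv_pp_zero (-c) r' r hr'0 hr'1 hr0 hr1 hsub'
    exact le_antisymm hle' hle
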